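/- If a sequence of nonnegative reals satisfies the recursion D_n ≤ (1 − γμ)D_{n-1} + γ(f(θ) − f(θ_n)) with (f(θ_n)) nonincreasing and 0 < γμ < 1, then (1 − (1−γμ)^n)/μ · (f(θ_n) − f(θ)) + D_n ≤ (1−γμ)^n D_0, and consequently f(θ_n) − f(θ) ≤ (1−γμ)^n D_0/γ. -/

import Mathlib

/-- Contraction recursion for Bregman-divergence sequences: from
`D_n ≤ (1−γμ)D_{n−1} + γ(f(θ) − f(θ_n))` with `(f(θ_n))` nonincreasing. -/
theorem stmt_6 (D u : ℕ → ℝ) (c γ μ : ℝ) (hγ : 0 < γ) (hμ : 0 < μ)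
    (hγμ : γ * μ < 1) (hD : ∀ n, 0 ≤ D n) (hu : Antitone u)
    (hrec : ∀ n, D (n + 1) ≤ (1 - γ * μ) * D n + γ * (c - u (n + 1))) :
    ∀ n : ℕ,
      (1 - (1 - γ * μ) ^ n) / μ * (u n - c) + D n ≤ (1 - γ * μ) ^ n * D 0
      ∧ (1 ≤ n → u n - c ≤ (1 - γ * μ) ^ n * D 0 / γ) := by
  set q : ℝ := 1 - γ * μ with hqdef
  have hq0 : 0 < q := by simp only [hqdef]; linarith
  have hq1 : q < 1 := by simp only [hqdef]; nlinarith [mul_pos hγ hμ]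
  have hmain : ∀ n : ℕ, (1 - q ^ n) / μ * (u n - c) + D n ≤ q ^ n * D 0 := by
    intro n
    induction n with
    | zero => simp
    | succ n ih =>
      have hqn : q ^ n ≤ 1 := pow_le_one₀ hq0.le hq1.le
      have ha : 0 ≤ (1 - q ^ n) / μ := div_nonneg (by linarith) hμ.le
      have hkey : (1 - q ^ (n + 1)) / μ = q * ((1 - q ^ n) / μ) + γ := by
        field_simp
        ring_nf
        rw [hqdef]; ring
      have hmono : u (n + 1) ≤ u n := hu (Nat.le_succ n)
      have h1 := mul_le_mul_of_nonneg_left ih hq0.le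
      have h2 := mul_le_mul_of_nonneg_left hmono (mul_nonneg hq0.le ha)
      have h3 := hrec n
      rw [hkey, pow_succ]
      set a : ℝ := (1 - q ^ n) / μ with hadef
      calc (q * a + γ) * (u (n + 1) - c) + D (n + 1)
          ≤ (q * a + γ) * (u (n + 1) - c) + (q * D n + γ * (c - u (n + 1))) := by
            linarith [h3]
        _ = q * a * (u (n + 1) - c) + q * D n := by ring
        _ ≤ q * a * (u n - c) + q * D n := by nlinarith [h2]
        _ = q * (a * (u n - c) + D n) := by ring
        _ ≤ q * (q ^ n * D 0) := mul_le_mul_of_nonneg_left ih hq0.le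
        _ = q ^ n * q * D 0 := by ring
  intro n
  refine ⟨hmain n, fun hn => ?_⟩
  have hqn1 : q ^ n ≤ q := by
    calc q ^ n ≤ q ^ 1 := pow_le_pow_of_le_one hq0.le hq1.le hn
    _ = q := pow_one q
  have hcoef : γ ≤ (1 - q ^ n) / μ := by
    rw [le_div_iff₀ hμ]
    simp only [hqdef] at hqn1 ⊢
    linarith
  have h := hmain n
  rcases le_or_gt (u n - c) 0 with h0 | h0
  · have : 0 ≤ q ^ n * D 0 / γ := div_nonneg (mul_nonneg (pow_nonneg hq0.le n) (hD 0)) hγ.le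
    linarith
  · rw [le_div_iff₀ hγ]
    have : γ * (u n - c) ≤ (1 - q ^ n) / μ * (u n - c) :=
      mul_le_mul_of_nonneg_right hcoef h0.le
    nlinarith [hD n]
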